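/- Fix β ∈ (1, 2] and L > 0, and let g : ℝ^d → [0,∞) be differentiable with ‖∇g(y) − ∇g(x)‖ ≤ L‖y − x‖^{β−1} for all x, y ∈ ℝ^d. Then for all x ∈ ℝ^d, ‖∇g(x)‖ ≤ Λ · g(x)^{1 − 1/β}, where Λ = L^{1/β} (1 − 1/β)^{−1+1/β}. -/

import Mathlib

open Real Filter Topology intervalIntegral

lemma taylor_aux (d : ℕ) (β L : ℝ) (hβ1 : 1 < β) (hL : 0 < L)
    (g : EuclideanSpace ℝ (Fin d) → ℝ)
    (hgd : Differentiable ℝ g)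
    (hhold : ∀ x y : EuclideanSpace ℝ (Fin d),
      ‖gradient g y - gradient g x‖ ≤ L * ‖y - x‖ ^ (β - 1))
    (x v : EuclideanSpace ℝ (Fin d)) :
    g (x + v) ≤ g x + inner ℝ (gradient g x) v + L / β * ‖v‖ ^ β := by
  have hβ0 : (0:ℝ) < β := by linarith
  have hβ1' : (0:ℝ) < β - 1 := by linarith
  rcases eq_or_ne v 0 with rfl | hv
  · simp [Real.zero_rpow (ne_of_gt hβ0)]
  have hvn : (0:ℝ) < ‖v‖ := norm_pos_iff.mpr hv
  -- continuity of the gradient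
  have hgradcont : Continuous (gradient g) := by
    rw [continuous_iff_continuousAt]
    intro z
    rw [ContinuousAt, tendsto_iff_norm_sub_tendsto_zero]
    have hb : Tendsto (fun y : EuclideanSpace ℝ (Fin d) => L * ‖y - z‖ ^ (β - 1)) (𝓝 z) (𝓝 0) := by
      have h1 : Tendsto (fun y : EuclideanSpace ℝ (Fin d) => ‖y - z‖) (𝓝 z) (𝓝 0) := by
        have h0 : Continuous fun y : EuclideanSpace ℝ (Fin d) => ‖y - z‖ :=
          (continuous_id.sub continuous_const).norm
        simpa using h0.tendsto z
      have h2 := h1.rpow_const (p := β - 1) (Or.inr (le_of_lt hβ1'))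
      rw [Real.zero_rpow (ne_of_gt hβ1')] at h2
      simpa using h2.const_mul L
    exact squeeze_zero (fun y => norm_nonneg _) (fun y => hhold z y) hb
  -- derivative along the line
  have hline : ∀ t : ℝ, HasDerivAt (fun t : ℝ => x + t • v) v t := by
    intro t
    simpa using ((hasDerivAt_id t).smul_const v).const_add x
  have hF : ∀ t : ℝ, HasDerivAt (fun t : ℝ => g (x + t • v))
      (inner ℝ (gradient g (x + t • v)) v : ℝ) t := by
    intro t
    have h1 := (hgd (x + t • v)).hasGradientAt.hasFDerivAt
    have := h1.comp_hasDerivAt t (hline t)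
    simpa [InnerProductSpace.toDual_apply_apply, Function.comp_def] using this
  have hcont : Continuous fun t : ℝ => (inner ℝ (gradient g (x + t • v)) v : ℝ) := by
    exact (hgradcont.comp (by continuity)).inner continuous_const
  have hint : IntervalIntegrable (fun t : ℝ => (inner ℝ (gradient g (x + t • v)) v : ℝ))
      MeasureTheory.volume 0 1 := hcont.intervalIntegrable 0 1
  have heq : ∫ t in (0:ℝ)..1, (inner ℝ (gradient g (x + t • v)) v : ℝ)
      = g (x + v) - g x := by
    have := intervalIntegral.integral_eq_sub_of_hasDerivAt (a := 0) (b := 1)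
      (fun t _ => hF t) hint
    simpa using this
  have hcont2 : Continuous fun t : ℝ =>
      (inner ℝ (gradient g x) v : ℝ) + L * t ^ (β - 1) * ‖v‖ ^ β := by
    apply continuous_const.add
    exact (continuous_const.mul (continuous_id.rpow_const fun _ => Or.inr (le_of_lt hβ1'))).mul continuous_const
  have hmono : ∫ t in (0:ℝ)..1, (inner ℝ (gradient g (x + t • v)) v : ℝ)
      ≤ ∫ t in (0:ℝ)..1, ((inner ℝ (gradient g x) v : ℝ) + L * t ^ (β - 1) * ‖v‖ ^ β) := by
    apply intervalIntegral.integral_mono_on (by norm_num) hint (hcont2.intervalIntegrable 0 1)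
    intro t ht
    have ht0 : 0 ≤ t := ht.1
    have key : (inner ℝ (gradient g (x + t • v)) v : ℝ) - inner ℝ (gradient g x) v
        ≤ L * t ^ (β - 1) * ‖v‖ ^ β := by
      rw [← inner_sub_left]
      calc (inner ℝ (gradient g (x + t • v) - gradient g x) v : ℝ)
          ≤ ‖gradient g (x + t • v) - gradient g x‖ * ‖v‖ := real_inner_le_norm _ _
        _ ≤ (L * ‖(x + t • v) - x‖ ^ (β - 1)) * ‖v‖ := by
            apply mul_le_mul_of_nonneg_right (hhold x _) (norm_nonneg v)
        _ = L * t ^ (β - 1) * ‖v‖ ^ β := by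
            have : ‖(x + t • v) - x‖ = t * ‖v‖ := by
              simp [norm_smul, abs_of_nonneg ht0]
            rw [this, Real.mul_rpow ht0 (le_of_lt hvn)]
            have hvb : ‖v‖ ^ (β - 1) * ‖v‖ = ‖v‖ ^ β := by
              rw [Real.rpow_sub hvn, Real.rpow_one]
              field_simp
            rw [mul_assoc, mul_assoc, hvb]
            ring
    linarith
  have hiq : IntervalIntegrable (fun t : ℝ => L * t ^ (β - 1) * ‖v‖ ^ β)
      MeasureTheory.volume 0 1 := by
    apply Continuous.intervalIntegrable
    exact (continuous_const.mul (continuous_id.rpow_const fun _ => Or.inr (le_of_lt hβ1'))).mul continuous_const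
  have hrhs : ∫ t in (0:ℝ)..1, ((inner ℝ (gradient g x) v : ℝ) + L * t ^ (β - 1) * ‖v‖ ^ β)
      = (inner ℝ (gradient g x) v : ℝ) + L / β * ‖v‖ ^ β := by
    rw [intervalIntegral.integral_add (intervalIntegrable_const) hiq]
    simp only [intervalIntegral.integral_const, smul_eq_mul, sub_zero, one_mul]
    congr 1
    have hfun : (fun t : ℝ => L * t ^ (β - 1) * ‖v‖ ^ β) = fun t : ℝ => (L * ‖v‖ ^ β) * t ^ (β - 1) :=
      funext fun t => by ring
    rw [hfun, intervalIntegral.integral_const_mul, integral_rpow (Or.inl (by linarith)),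
      sub_add_cancel, Real.one_rpow, Real.zero_rpow (ne_of_gt hβ0)]
    ring
  linarith [heq ▸ hmono, hrhs ▸ hmono]

theorem stmt_19 (d : ℕ) (β L : ℝ) (hβ1 : 1 < β) (hβ2 : β ≤ 2) (hL : 0 < L)
    (g : EuclideanSpace ℝ (Fin d) → ℝ) (hg0 : ∀ x, 0 ≤ g x)
    (hgd : Differentiable ℝ g)
    (hhold : ∀ x y : EuclideanSpace ℝ (Fin d),
      ‖gradient g y - gradient g x‖ ≤ L * ‖y - x‖ ^ (β - 1)) :
    ∀ x : EuclideanSpace ℝ (Fin d),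
      ‖gradient g x‖ ≤ L ^ ((1 : ℝ) / β) * (1 - 1 / β) ^ (-1 + 1 / β) * g x ^ (1 - 1 / β) := by
  intro x
  have hβ0 : (0:ℝ) < β := by linarith
  have hβ1' : (0:ℝ) < β - 1 := by linarith
  have hβn : β ≠ 0 := ne_of_gt hβ0
  have hβ1n : β - 1 ≠ 0 := ne_of_gt hβ1'
  have hc : (0:ℝ) < 1 - 1/β := by
    have : 1/β < 1 := by rw [div_lt_one hβ0]; exact hβ1
    linarith
  set a := ‖gradient g x‖ with ha
  have ha0 : (0:ℝ) ≤ a := norm_nonneg _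
  rcases ha0.eq_or_lt with h0 | hpos
  · rw [← h0]
    exact mul_nonneg (mul_nonneg (Real.rpow_nonneg hL.le _) (Real.rpow_nonneg hc.le _))
      (Real.rpow_nonneg (hg0 x) _)
  set s : ℝ := a ^ ((2 - β)/(β - 1)) * L ^ (-(1:ℝ)/(β-1)) with hs
  have hspos : 0 < s :=
    mul_pos (Real.rpow_pos_of_pos hpos _) (Real.rpow_pos_of_pos hL _)
  have htay := taylor_aux d β L hβ1 hL g hgd hhold x (-(s • gradient g x))
  have hnv : ‖-(s • gradient g x)‖ = s * a := by
    rw [norm_neg, norm_smul, Real.norm_eq_abs, abs_of_pos hspos]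
  have hinner : (inner ℝ (gradient g x) (-(s • gradient g x)) : ℝ) = -(s * (a * a)) := by
    rw [inner_neg_right, real_inner_smul_right, real_inner_self_eq_norm_mul_norm]
  rw [hnv, hinner] at htay
  have h0g : 0 ≤ g (x + -(s • gradient g x)) := hg0 _
  have hsa : s * a = a ^ ((1:ℝ)/(β-1)) * L ^ (-(1:ℝ)/(β-1)) := by
    calc s * a = (a ^ ((2 - β)/(β - 1)) * a) * L ^ (-(1:ℝ)/(β-1)) := by rw [hs]; ring
      _ = a ^ ((1:ℝ)/(β-1)) * L ^ (-(1:ℝ)/(β-1)) := by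
          rw [← Real.rpow_add_one (ne_of_gt hpos)]
          congr 2
          field_simp
          norm_num
  have hMkey : (1 - 1/β) * (a ^ (β/(β-1)) * L ^ (-(1:ℝ)/(β-1))) ≤ g x := by
    have e1 : s * (a * a) = a ^ (β/(β-1)) * L ^ (-(1:ℝ)/(β-1)) := by
      calc s * (a * a) = (s * a) * a := by ring
        _ = (a ^ ((1:ℝ)/(β-1)) * a) * L ^ (-(1:ℝ)/(β-1)) := by rw [hsa]; ring
        _ = a ^ (β/(β-1)) * L ^ (-(1:ℝ)/(β-1)) := by
            rw [← Real.rpow_add_one (ne_of_gt hpos)]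
            congr 2
            field_simp
            ring
    have e2 : L / β * (s * a) ^ β = (1/β) * (a ^ (β/(β-1)) * L ^ (-(1:ℝ)/(β-1))) := by
      rw [hsa, Real.mul_rpow (Real.rpow_nonneg ha0 _) (Real.rpow_nonneg hL.le _),
        ← Real.rpow_mul ha0, ← Real.rpow_mul hL.le]
      have h5 : ((1:ℝ)/(β-1)) * β = β/(β-1) := by ring
      have h4 : (-(1:ℝ)/(β-1)) * β = -(β/(β-1)) := by ring
      rw [h5, h4]
      have h3 : L * L ^ (-(β/(β-1))) = L ^ (-(1:ℝ)/(β-1)) := by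
        nth_rewrite 1 [← Real.rpow_one L]
        rw [← Real.rpow_add hL]
        congr 1
        field_simp
        ring
      calc L / β * (a ^ (β/(β-1)) * L ^ (-(β/(β-1))))
          = 1/β * (a ^ (β/(β-1)) * (L * L ^ (-(β/(β-1))))) := by ring
        _ = _ := by rw [h3]
    rw [e2, e1] at htay
    linarith
  have hM : a ^ (β/(β-1)) ≤ g x / (1 - 1/β) * L ^ ((1:ℝ)/(β-1)) := by
    have h6 : a ^ (β/(β-1)) * L ^ (-(1:ℝ)/(β-1)) ≤ g x / (1 - 1/β) := by
      rw [le_div_iff₀ hc]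
      linarith
    calc a ^ (β/(β-1)) = (a ^ (β/(β-1)) * L ^ (-(1:ℝ)/(β-1))) * L ^ ((1:ℝ)/(β-1)) := by
          rw [mul_assoc, ← Real.rpow_add hL]
          have : -(1:ℝ)/(β-1) + 1/(β-1) = 0 := by ring
          rw [this, Real.rpow_zero, mul_one]
      _ ≤ _ := mul_le_mul_of_nonneg_right h6 (Real.rpow_nonneg hL.le _)
  have hfin := Real.rpow_le_rpow (Real.rpow_nonneg ha0 _) hM
    (le_of_lt (div_pos hβ1' hβ0))
  rw [← Real.rpow_mul ha0] at hfin
  have hexp : β/(β-1) * ((β-1)/β) = 1 := by field_simp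
  rw [hexp, Real.rpow_one] at hfin
  calc a ≤ (g x / (1 - 1/β) * L ^ ((1:ℝ)/(β-1))) ^ ((β-1)/β) := hfin
    _ = L ^ ((1:ℝ)/β) * (1 - 1/β) ^ (-1 + 1/β) * g x ^ (1 - 1/β) := by
        rw [Real.mul_rpow (div_nonneg (hg0 x) hc.le) (Real.rpow_nonneg hL.le _),
          Real.div_rpow (hg0 x) hc.le, ← Real.rpow_mul hL.le]
        have e7 : (1:ℝ)/(β-1) * ((β-1)/β) = 1/β := by field_simp
        have e9 : ((1:ℝ) - 1/β) ^ (-1 + 1/β) = ((1 - 1/β) ^ ((β-1)/β))⁻¹ := by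
          rw [← Real.rpow_neg hc.le]
          congr 1
          field_simp
          ring
        have e8 : (β-1)/β = 1 - 1/β := by field_simp
        rw [e7, e9, e8, div_eq_mul_inv]
        ring
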